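/- Let n ≥ 1. For all permutations β₁, β₂, β₃, β₄ of {1,…,2n}, the chain functional F(β) := |β₁| + 2|γ_{n,n}⁻¹β₂| + |β₃| + |γ_{n,n}⁻¹β₃| + |β₄| + |β₁⁻¹β₂| + |β₂⁻¹β₃| + |β₃⁻¹β₄| satisfies F(β) ≥ 3(2n − 2). -/

import Mathlib

/-!
For a permutation `σ` of a finite set of size `m`, `cycleCount σ` is the number of cycles
(fixed points count as cycles) and `permLen σ = m - cycleCount σ` (the minimal number of
transpositions needed to write `σ`).  We model `{1,…,2n}` as `Fin n ⊕ Fin n`, the first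
summand being `{1,…,n}` and the second `{n+1,…,2n}`.  `gammaNN n` is the product of the
two `n`-cycles `(1,2,…,n)` and `(n+1,…,2n)`.
-/

/-- The number of cycles of a permutation, where fixed points count as cycles. -/
noncomputable def cycleCount {α : Type*} [Fintype α] [DecidableEq α]
    (σ : Equiv.Perm α) : ℕ :=
  Multiset.card σ.cycleType + (Fintype.card α - σ.support.card)

/-- `|σ| = m - #(σ)`, the minimal number of transpositions whose product is `σ`. -/
noncomputable def permLen {α : Type*} [Fintype α] [DecidableEq α]
    (σ : Equiv.Perm α) : ℕ :=
  Fintype.card α - cycleCount σ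

/-- `γ_{n,n}`: the product of the two `n`-cycles `(1,…,n)` and `(n+1,…,2n)`. -/
def gammaNN (n : ℕ) : Equiv.Perm (Fin n ⊕ Fin n) :=
  Equiv.sumCongr (finRotate n) (finRotate n)

/-- A permutation of `{1,…,2n}` is connected if some cycle of it contains both an
element of `{1,…,n}` and an element of `{n+1,…,2n}`. -/
def IsConnectedPerm {n : ℕ} (β : Equiv.Perm (Fin n ⊕ Fin n)) : Prop :=
  ∃ a b : Fin n, β.SameCycle (Sum.inl a) (Sum.inr b)

/-- The chain functional
`F(β) = |β₁| + 2|γ_{n,n}⁻¹β₂| + |β₃| + |γ_{n,n}⁻¹β₃| + |β₄| + |β₁⁻¹β₂| + |β₂⁻¹β₃| + |β₃⁻¹β₄|`. -/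
noncomputable def chainF {n : ℕ} (b₁ b₂ b₃ b₄ : Equiv.Perm (Fin n ⊕ Fin n)) : ℕ :=
  permLen b₁ + 2 * permLen ((gammaNN n)⁻¹ * b₂) + permLen b₃
    + permLen ((gammaNN n)⁻¹ * b₃) + permLen b₄
    + permLen (b₁⁻¹ * b₂) + permLen (b₂⁻¹ * b₃) + permLen (b₃⁻¹ * b₄)


section ChainAuxSection

open Equiv Equiv.Perm Module LinearMap

set_option linter.unusedSectionVars false

variable {α : Type*} [Fintype α] [DecidableEq α]

private lemma card_cycleType_le (σ : Perm α) :
    Multiset.card σ.cycleType ≤ σ.support.card := by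
  calc Multiset.card σ.cycleType = Multiset.card σ.cycleType • 1 := by simp
    _ ≤ σ.cycleType.sum := Multiset.card_nsmul_le_sum
        (fun x hx => (Equiv.Perm.one_lt_of_mem_cycleType hx).le)
    _ = σ.support.card := σ.sum_cycleType

private lemma permLen_add_cycleCount (σ : Perm α) :
    permLen σ + cycleCount σ = Fintype.card α := by
  have h1 := card_cycleType_le σ
  have h2 : σ.support.card ≤ Fintype.card α := σ.support.card_le_univ
  unfold permLen cycleCount
  omega

private lemma permLen_eq (σ : Perm α) :
    permLen σ = σ.support.card - Multiset.card σ.cycleType := by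
  have h1 := card_cycleType_le σ
  have h2 : σ.support.card ≤ Fintype.card α := σ.support.card_le_univ
  unfold permLen cycleCount
  omega

private lemma permLen_inv (σ : Perm α) : permLen σ⁻¹ = permLen σ := by
  unfold permLen cycleCount
  rw [Equiv.Perm.cycleType_inv, Equiv.Perm.support_inv]

private lemma permLen_one : permLen (1 : Perm α) = 0 := by
  unfold permLen cycleCount
  simp

private lemma permLen_mul_disjoint {σ τ : Perm α} (h : Equiv.Perm.Disjoint σ τ) :
    permLen (σ * τ) = permLen σ + permLen τ := by
  rw [permLen_eq, permLen_eq, permLen_eq, h.cycleType_mul, h.card_support_mul,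
    Multiset.card_add]
  have := card_cycleType_le σ
  have := card_cycleType_le τ
  omega

private lemma isSwap_of_mem_zipWith {l : List α} (h : l.Nodup) {g : Perm α}
    (hg : g ∈ List.zipWith Equiv.swap l l.tail) : g.IsSwap := by
  rw [List.mem_iff_getElem] at hg
  obtain ⟨i, hi, rfl⟩ := hg
  rw [List.length_zipWith, List.length_tail] at hi
  have hi1 : i < l.length := lt_of_lt_of_le (lt_min_iff.mp hi).1 le_rfl
  have hi2 : i + 1 < l.length := by omega
  rw [List.getElem_zipWith, List.getElem_tail]
  refine ⟨l[i], l[i+1], fun hEq => ?_, rfl⟩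
  have : i = i + 1 := (List.Nodup.getElem_inj_iff h).mp hEq
  omega

private lemma exists_swap_list (σ : Perm α) :
    ∃ l : List (Perm α), (∀ g ∈ l, g.IsSwap) ∧ l.prod = σ ∧ l.length = permLen σ := by
  induction σ using Equiv.Perm.cycle_induction_on with
  | base_one => exact ⟨[], by simp, by simp, by simp [permLen_one]⟩
  | base_cycles σ hσ =>
    obtain ⟨x, hx, -⟩ := id hσ
    refine ⟨List.zipWith Equiv.swap (σ.toList x) (σ.toList x).tail,
      fun g hg => isSwap_of_mem_zipWith (Equiv.Perm.nodup_toList σ x) hg, ?_, ?_⟩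
    · have := Equiv.Perm.formPerm_toList σ x
      rw [hσ.cycleOf_eq hx] at this
      exact this
    · rw [List.length_zipWith, List.length_tail, Equiv.Perm.length_toList,
        hσ.cycleOf_eq hx, permLen_eq, hσ.cycleType]
      simp
  | induction_disjoint σ τ hd hc ih1 ih2 =>
    obtain ⟨l1, hs1, hp1, hl1⟩ := ih1
    obtain ⟨l2, hs2, hp2, hl2⟩ := ih2
    exact ⟨l1 ++ l2, by
      intro g hg; rcases List.mem_append.mp hg with h | h
      exacts [hs1 g h, hs2 g h],
      by rw [List.prod_append, hp1, hp2],
      by rw [List.length_append, hl1, hl2, permLen_mul_disjoint hd]⟩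

/-- The linear map `f ↦ f∘σ - f` on `α → ℚ`. -/
private noncomputable def DL (σ : Perm α) : (α → ℚ) →ₗ[ℚ] (α → ℚ) :=
  LinearMap.funLeft ℚ ℚ ⇑σ - LinearMap.id

private lemma DL_apply (σ : Perm α) (f : α → ℚ) (a : α) : DL σ f a = f (σ a) - f a := rfl

private lemma rank_DL_swap_le (x y : α) :
    finrank ℚ (LinearMap.range (DL (Equiv.swap x y))) ≤ 1 := by
  set v : α → ℚ := Pi.single x 1 - Pi.single y 1 with hv
  have hform : ∀ f : α → ℚ, DL (Equiv.swap x y) f = (f y - f x) • v := by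
    intro f
    rcases eq_or_ne x y with rfl | hxy
    · funext a
      simp [DL_apply, hv, Equiv.swap_self]
    · funext a
      rcases eq_or_ne a x with rfl | hax
      · simp [DL_apply, hv, Equiv.swap_apply_left, Pi.single_apply, hxy]
      rcases eq_or_ne a y with rfl | hay
      · simp [DL_apply, hv, Equiv.swap_apply_right, Pi.single_apply, hax]
        try ring
      · simp [DL_apply, hv, Equiv.swap_apply_of_ne_of_ne hax hay,
          Pi.single_apply, hax, hay]
  have hle : LinearMap.range (DL (Equiv.swap x y)) ≤ Submodule.span ℚ {v} := by
    rintro _ ⟨f, rfl⟩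
    rw [hform]
    exact Submodule.smul_mem _ _ (Submodule.mem_span_singleton_self v)
  calc finrank ℚ (LinearMap.range (DL (Equiv.swap x y)))
      ≤ finrank ℚ (Submodule.span ℚ {v}) := Submodule.finrank_mono hle
    _ ≤ 1 := by simpa using finrank_span_le_card ({v} : Set (α → ℚ))

private lemma rank_DL_mul_le (σ τ : Perm α) :
    finrank ℚ (LinearMap.range (DL (σ * τ)))
      ≤ finrank ℚ (LinearMap.range (DL σ)) + finrank ℚ (LinearMap.range (DL τ)) := by
  have hsum : DL (σ * τ) = (LinearMap.funLeft ℚ ℚ ⇑τ).comp (DL σ) + DL τ := by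
    apply LinearMap.ext; intro f
    funext a
    simp [DL_apply, LinearMap.funLeft_apply, Equiv.Perm.mul_apply]
    try ring
  have hrange : LinearMap.range (DL (σ * τ)) ≤
      LinearMap.range ((LinearMap.funLeft ℚ ℚ ⇑τ).comp (DL σ)) ⊔ LinearMap.range (DL τ) := by
    rintro _ ⟨f, rfl⟩
    rw [hsum]
    exact Submodule.add_mem_sup (LinearMap.mem_range_self _ f) (LinearMap.mem_range_self _ f)
  have h1 : finrank ℚ (LinearMap.range ((LinearMap.funLeft ℚ ℚ ⇑τ).comp (DL σ)))
      ≤ finrank ℚ (LinearMap.range (DL σ)) := by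
    rw [LinearMap.range_comp]
    exact Submodule.finrank_map_le _ _
  calc finrank ℚ (LinearMap.range (DL (σ * τ)))
      ≤ finrank ℚ ((LinearMap.range ((LinearMap.funLeft ℚ ℚ ⇑τ).comp (DL σ))) ⊔
          (LinearMap.range (DL τ)) : Submodule ℚ (α → ℚ)) := Submodule.finrank_mono hrange
    _ ≤ _ := by
        have := Submodule.finrank_sup_add_finrank_inf_eq
          (LinearMap.range ((LinearMap.funLeft ℚ ℚ ⇑τ).comp (DL σ))) (LinearMap.range (DL τ))
        omega
    _ ≤ _ := add_le_add h1 le_rfl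

private lemma rank_DL_le_permLen (σ : Perm α) :
    finrank ℚ (LinearMap.range (DL σ)) ≤ permLen σ := by
  obtain ⟨l, hs, hp, hlen⟩ := exists_swap_list σ
  subst hp
  rw [← hlen]
  clear hlen
  induction l with
  | nil =>
    simp only [List.prod_nil, List.length_nil, le_zero_iff]
    have : DL (1 : Perm α) = 0 := by
      apply LinearMap.ext; intro f; funext a; simp [DL_apply]
    show finrank ℚ (LinearMap.range (DL (1 : Perm α))) = 0
    rw [this]
    simp
  | cons s t ih =>
    obtain ⟨x, y, hxy, rfl⟩ := hs s List.mem_cons_self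
    calc finrank ℚ (LinearMap.range (DL ((Equiv.swap x y :: t).prod)))
        = finrank ℚ (LinearMap.range (DL (Equiv.swap x y * t.prod))) := by
          rw [List.prod_cons]
      _ ≤ _ + _ := rank_DL_mul_le _ _
      _ ≤ 1 + t.length := add_le_add (rank_DL_swap_le x y)
          (ih fun g hg => hs g (List.mem_cons_of_mem _ hg))
      _ = (Equiv.swap x y :: t).length := by simp [add_comm]

private lemma sameCycle_apply_eq {σ : Perm α} {f : α → ℚ} (hf : ∀ a, f (σ a) = f a)
    {a b : α} (h : σ.SameCycle a b) : f a = f b := by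
  obtain ⟨k, hk⟩ := h
  have hinv : ∀ c, f (σ⁻¹ c) = f c := by
    intro c
    conv_rhs => rw [← (show σ (σ⁻¹ c) = c from σ.apply_symm_apply c)]
    rw [hf]
  have hnat : ∀ (m : ℕ) (c : α), f ((σ ^ m) c) = f c := by
    intro m
    induction m with
    | zero => simp
    | succ m ih => intro c; rw [pow_succ', Equiv.Perm.mul_apply, hf, ih]
  have hnatinv : ∀ (m : ℕ) (c : α), f ((σ⁻¹ ^ m) c) = f c := by
    intro m
    induction m with
    | zero => simp
    | succ m ih => intro c; rw [pow_succ', Equiv.Perm.mul_apply, hinv, ih]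
  rw [← hk]
  rcases k with m | m
  · rw [Int.ofNat_eq_coe, zpow_natCast, hnat]
  · rw [zpow_negSucc, ← inv_pow, hnatinv]

private lemma finrank_ker_DL_le (σ : Perm α) :
    finrank ℚ (LinearMap.ker (DL σ)) ≤ cycleCount σ := by
  classical
  have hpt : ∀ c : {c // c ∈ σ.cycleFactorsFinset}, ∃ a, a ∈ (c : Perm α).support := by
    rintro ⟨c, hc⟩
    obtain ⟨x, hx, -⟩ := (Equiv.Perm.mem_cycleFactorsFinset_iff.mp hc).1
    exact ⟨x, Equiv.Perm.mem_support.mpr hx⟩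
  choose pt hptmem using hpt
  set Φ : (α → ℚ) →ₗ[ℚ]
      (({a // a ∈ (σ.supportᶜ : Finset α)} → ℚ) × ({c // c ∈ σ.cycleFactorsFinset} → ℚ)) :=
    LinearMap.prod
      (LinearMap.funLeft ℚ ℚ (fun a : {a // a ∈ (σ.supportᶜ : Finset α)} => (a : α)))
      (LinearMap.funLeft ℚ ℚ pt) with hΦ
  have hinj : Function.Injective (Φ.comp (LinearMap.ker (DL σ)).subtype) := by
    rw [← LinearMap.ker_eq_bot, LinearMap.ker_eq_bot']
    rintro ⟨f, hfker⟩ hf0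
    have hfix : ∀ a, f (σ a) = f a := by
      intro a
      have := congrFun (LinearMap.mem_ker.mp hfker) a
      simp [DL_apply] at this
      linarith [this]
    have h1 : ∀ a : α, a ∉ σ.support → f a = 0 := by
      intro a ha
      have := congrFun (congrArg Prod.fst hf0) ⟨a, Finset.mem_compl.mpr ha⟩
      simpa [hΦ] using this
    have h2 : ∀ c : {c // c ∈ σ.cycleFactorsFinset}, f (pt c) = 0 := by
      intro c
      have := congrFun (congrArg Prod.snd hf0) c
      simpa [hΦ] using this
    apply Subtype.ext
    funext a
    show f a = 0
    by_cases ha : a ∈ σ.support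
    · have hc : σ.cycleOf a ∈ σ.cycleFactorsFinset :=
        Equiv.Perm.cycleOf_mem_cycleFactorsFinset_iff.mpr ha
      have hmem := hptmem ⟨σ.cycleOf a, hc⟩
      have hsc : σ.SameCycle a (pt ⟨σ.cycleOf a, hc⟩) :=
        (Equiv.Perm.mem_support_cycleOf_iff.mp hmem).1
      rw [sameCycle_apply_eq hfix hsc]
      exact h2 _
    · exact h1 a ha
  have hle := LinearMap.finrank_le_finrank_of_injective hinj
  have hcod : finrank ℚ
      (({a // a ∈ (σ.supportᶜ : Finset α)} → ℚ) × ({c // c ∈ σ.cycleFactorsFinset} → ℚ))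
      = (Fintype.card α - σ.support.card) + Multiset.card σ.cycleType := by
    rw [Module.finrank_prod, Module.finrank_pi, Module.finrank_pi]
    congr 1
    · rw [Fintype.card_coe, Finset.card_compl]
    · rw [Fintype.card_coe]
      rw [Equiv.Perm.cycleType_def, Multiset.card_map]
      rfl
  rw [hcod] at hle
  unfold cycleCount
  omega

private lemma permLen_le_rank_DL (σ : Perm α) :
    permLen σ ≤ finrank ℚ (LinearMap.range (DL σ)) := by
  have h1 := LinearMap.finrank_range_add_finrank_ker (DL σ)
  have h2 : finrank ℚ (α → ℚ) = Fintype.card α := Module.finrank_pi ℚ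
  have h3 := finrank_ker_DL_le σ
  have h4 := permLen_add_cycleCount σ
  omega

/-- `permLen` is subadditive. -/
private lemma permLen_mul_le (σ τ : Perm α) :
    permLen (σ * τ) ≤ permLen σ + permLen τ :=
  (permLen_le_rank_DL (σ * τ)).trans <| (rank_DL_mul_le σ τ).trans <|
    add_le_add (rank_DL_le_permLen σ) (rank_DL_le_permLen τ)

private lemma sumCongr_zpow {β γ : Type*} (k : ℤ) (e : Perm β) (f : Perm γ) :
    (Equiv.sumCongr e f) ^ k = Equiv.sumCongr (e ^ k) (f ^ k) := by
  have := map_zpow (Equiv.Perm.sumCongrHom β γ) (e, f) k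
  simpa [Equiv.Perm.sumCongrHom, Prod.pow_def] using this.symm

private lemma isCycle_sumCongr_left {β γ : Type*} [DecidableEq β] [Fintype β] {e : Perm β}
    (he : e.IsCycle) : Equiv.Perm.IsCycle (Equiv.sumCongr e (1 : Perm γ)) := by
  obtain ⟨x, hx, hall⟩ := he
  refine ⟨Sum.inl x, by simpa using hx, ?_⟩
  rintro (b | b) hb
  · have hb' : e b ≠ b := by simpa using hb
    obtain ⟨k, hk⟩ := hall hb'
    exact ⟨k, by rw [sumCongr_zpow]; simp [hk]⟩
  · simp at hb

private lemma isCycle_sumCongr_right {β γ : Type*} [DecidableEq γ] [Fintype γ] {e : Perm γ}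
    (he : e.IsCycle) : Equiv.Perm.IsCycle (Equiv.sumCongr (1 : Perm β) e) := by
  obtain ⟨x, hx, hall⟩ := he
  refine ⟨Sum.inr x, by simpa using hx, ?_⟩
  rintro (b | b) hb
  · simp at hb
  · have hb' : e b ≠ b := by simpa using hb
    obtain ⟨k, hk⟩ := hall hb'
    exact ⟨k, by rw [sumCongr_zpow]; simp [hk]⟩

private lemma permLen_gammaNN {n : ℕ} (hn : 2 ≤ n) : permLen (gammaNN n) = 2 * n - 2 := by
  obtain ⟨m, rfl⟩ : ∃ m, n = m + 2 := ⟨n - 2, by omega⟩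
  set n := m + 2
  have hfr : (finRotate n).IsCycle := isCycle_finRotate
  have hfrsupp : (finRotate n).support = Finset.univ := support_finRotate
  set c₁ : Perm (Fin n ⊕ Fin n) := Equiv.sumCongr (finRotate n) 1 with hc₁
  set c₂ : Perm (Fin n ⊕ Fin n) := Equiv.sumCongr 1 (finRotate n) with hc₂
  have hmul : gammaNN n = c₁ * c₂ := by
    rw [hc₁, hc₂, Equiv.Perm.sumCongr_mul]
    simp [gammaNN]
  have hdisj : Equiv.Perm.Disjoint c₁ c₂ := by
    rintro (a | a)
    · right; simp [hc₂]
    · left; simp [hc₁]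
  have hcyc1 : c₁.IsCycle := isCycle_sumCongr_left hfr
  have hcyc2 : c₂.IsCycle := isCycle_sumCongr_right hfr
  have hs1 : c₁.support = Finset.univ.map ⟨Sum.inl, Sum.inl_injective⟩ := by
    ext (a | a) <;> simp [hc₁, Equiv.Perm.mem_support]
  have hs2 : c₂.support = Finset.univ.map ⟨Sum.inr, Sum.inr_injective⟩ := by
    ext (a | a) <;> simp [hc₂, Equiv.Perm.mem_support]
  have hcard1 : c₁.support.card = n := by rw [hs1]; simp
  have hcard2 : c₂.support.card = n := by rw [hs2]; simp
  rw [hmul, permLen_eq, hdisj.cycleType_mul, hdisj.card_support_mul,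
    hcyc1.cycleType, hcyc2.cycleType, hcard1, hcard2]
  simp
  omega

end ChainAuxSection

theorem chainF_ge (n : ℕ) (hn : 1 ≤ n) (b₁ b₂ b₃ b₄ : Equiv.Perm (Fin n ⊕ Fin n)) :
    3 * (2 * n - 2) ≤ chainF b₁ b₂ b₃ b₄ := by
  rcases Nat.lt_or_ge n 2 with h | h
  · have h0 : 3 * (2 * n - 2) = 0 := by omega
    rw [h0]
    exact Nat.zero_le _
  · set γ := gammaNN n with hγdef
    have hγ : permLen γ = 2 * n - 2 := permLen_gammaNN h
    have hA : permLen γ ≤ permLen b₁ + permLen (b₁⁻¹ * b₂) + permLen (γ⁻¹ * b₂) := by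
      have e : (b₁ * (b₁⁻¹ * b₂)) * (γ⁻¹ * b₂)⁻¹ = γ := by group
      calc permLen γ = permLen ((b₁ * (b₁⁻¹ * b₂)) * (γ⁻¹ * b₂)⁻¹) := by rw [e]
        _ ≤ permLen (b₁ * (b₁⁻¹ * b₂)) + permLen ((γ⁻¹ * b₂)⁻¹) := permLen_mul_le _ _
        _ = permLen (b₁ * (b₁⁻¹ * b₂)) + permLen (γ⁻¹ * b₂) := by rw [permLen_inv]
        _ ≤ permLen b₁ + permLen (b₁⁻¹ * b₂) + permLen (γ⁻¹ * b₂) :=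
            add_le_add_left (permLen_mul_le _ _) _
    have hB : permLen γ ≤ permLen b₃ + permLen (γ⁻¹ * b₃) := by
      have e : b₃ * (γ⁻¹ * b₃)⁻¹ = γ := by group
      calc permLen γ = permLen (b₃ * (γ⁻¹ * b₃)⁻¹) := by rw [e]
        _ ≤ permLen b₃ + permLen ((γ⁻¹ * b₃)⁻¹) := permLen_mul_le _ _
        _ = permLen b₃ + permLen (γ⁻¹ * b₃) := by rw [permLen_inv]
    have hC : permLen γ ≤ permLen b₄ + permLen (b₃⁻¹ * b₄) + permLen (b₂⁻¹ * b₃)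
        + permLen (γ⁻¹ * b₂) := by
      have e : ((b₄ * (b₃⁻¹ * b₄)⁻¹) * (b₂⁻¹ * b₃)⁻¹) * (γ⁻¹ * b₂)⁻¹ = γ := by group
      calc permLen γ = permLen (((b₄ * (b₃⁻¹ * b₄)⁻¹) * (b₂⁻¹ * b₃)⁻¹) * (γ⁻¹ * b₂)⁻¹) := by
            rw [e]
        _ ≤ permLen ((b₄ * (b₃⁻¹ * b₄)⁻¹) * (b₂⁻¹ * b₃)⁻¹) + permLen ((γ⁻¹ * b₂)⁻¹) :=
            permLen_mul_le _ _
        _ ≤ (permLen (b₄ * (b₃⁻¹ * b₄)⁻¹) + permLen ((b₂⁻¹ * b₃)⁻¹)) + permLen ((γ⁻¹ * b₂)⁻¹) :=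
            add_le_add_left (permLen_mul_le _ _) _
        _ ≤ ((permLen b₄ + permLen ((b₃⁻¹ * b₄)⁻¹)) + permLen ((b₂⁻¹ * b₃)⁻¹))
            + permLen ((γ⁻¹ * b₂)⁻¹) :=
            add_le_add_left (add_le_add_left (permLen_mul_le _ _) _) _
        _ = permLen b₄ + permLen (b₃⁻¹ * b₄) + permLen (b₂⁻¹ * b₃) + permLen (γ⁻¹ * b₂) := by
            rw [permLen_inv, permLen_inv, permLen_inv]
    unfold chainF
    rw [← hγdef]
    omega
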